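/- Let R = F_4[[u_1]][u, u^{-1}] be the graded ring with u_1 in degree 0 and u a unit in degree −2, and let a generator ω of a cyclic group C_3 act F_4-linearly on R by ring homomorphisms via ω(u_1) = ζ u_1 and ω(u) = ζ u, where ζ ∈ F_4 is a primitive third root of unity. Then the fixed subring R^{C_3} equals F_4[[u_1^3]][v_1, v_2, v_2^{-1}]/(v_1^3 = v_2 u_1^3), where v_1 = u_1 u^{-1} and v_2 = u^{-3}; concretely the monomials u_1^a u^b fixed by ω are exactly those with a + b ≡ 0 mod 3. -/

import Mathlib

/-- Let `R = F₄[[u₁]][u^{±1}]`, realized as Laurent polynomials in `u`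
over `F₄[[u₁]]` (so `u₁ = C X` and `u = T 1`), and let a generator `ω` of `C₃` act by
the `F₄`-algebra map `ω(u₁) = ζu₁`, `ω(u) = ζu` for `ζ` a primitive cube root of unity.
Then a monomial `u₁^a u^b` is fixed by `ω` exactly when `a + b ≡ 0 mod 3` (which is the
concrete description of the fixed subring `F₄[[u₁³]][v₁, v₂^{±1}]/(v₁³ = v₂u₁³)`). -/
theorem stmt_9 (ζ : GaloisField 2 2) (hζ : ζ ^ 2 + ζ + 1 = 0)
    (ω : LaurentPolynomial (PowerSeries (GaloisField 2 2)) →ₐ[GaloisField 2 2]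
         LaurentPolynomial (PowerSeries (GaloisField 2 2)))
    (hω3 : ∀ x, ω (ω (ω x)) = x)
    (hu1 : ω (LaurentPolynomial.C PowerSeries.X)
         = LaurentPolynomial.C (PowerSeries.C ζ * PowerSeries.X))
    (hu : ω (LaurentPolynomial.T 1)
        = LaurentPolynomial.C (PowerSeries.C ζ)
            * LaurentPolynomial.T 1) :
    ∀ (a : ℕ) (b : ℤ),
      ω (LaurentPolynomial.C (PowerSeries.X ^ a) * LaurentPolynomial.T b)
          = LaurentPolynomial.C (PowerSeries.X ^ a) * LaurentPolynomial.T b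
        ↔ ((a : ℤ) + b) % 3 = 0 := by
  classical
  have h2 : (2 : (GaloisField 2 2)) = 0 := by
    have := CharP.cast_eq_zero (GaloisField 2 2) 2
    simpa using this
  have hζ0 : ζ ≠ 0 := by
    intro h; rw [h] at hζ; simp at hζ
  have hζ1 : ζ ≠ 1 := by
    intro h; rw [h] at hζ; norm_num at hζ
    have : (3 : (GaloisField 2 2)) = 2 + 1 := by norm_num
    rw [this, h2, zero_add] at hζ
    exact one_ne_zero hζ
  have hζ3 : ζ ^ 3 = 1 := by
    have h : ζ ^ 3 - 1 = (ζ - 1) * (ζ ^ 2 + ζ + 1) := by ring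
    rw [hζ, mul_zero, sub_eq_zero] at h
    exact h
  have hζ2 : ζ ^ 2 ≠ 1 := by
    intro h
    rw [h] at hζ
    have : ζ = -2 := by linear_combination hζ
    rw [this, h2, neg_zero] at hζ0
    exact hζ0 rfl
  have hζinv : ζ⁻¹ = ζ ^ 2 := by
    have hm : ζ * ζ ^ 2 = 1 := by rw [show ζ * ζ ^ 2 = ζ ^ 3 by ring, hζ3]
    exact inv_eq_of_mul_eq_one_right hm
  -- key arithmetic fact
  have key : ∀ n : ℤ, ζ ^ n = 1 ↔ n % 3 = 0 := by
    intro n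
    have hd : n = 3 * (n / 3) + n % 3 := (Int.mul_ediv_add_emod n 3).symm
    have hred : ζ ^ n = ζ ^ (n % 3) := by
      conv_lhs => rw [hd]
      rw [zpow_add₀ hζ0, zpow_mul, show ((3:ℤ)) = ((3:ℕ):ℤ) by norm_num,
        zpow_natCast, hζ3, one_zpow, one_mul]
    constructor
    · intro h
      rw [hred] at h
      by_contra hr
      have h0 : n % 3 = 1 ∨ n % 3 = 2 := by omega
      rcases h0 with h0 | h0
      · rw [h0, zpow_one] at h; exact hζ1 h
      · rw [h0, show ((2:ℤ)) = ((2:ℕ):ℤ) by norm_num, zpow_natCast] at h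
        exact hζ2 h
    · intro h
      rw [hred, h, zpow_zero]
  -- injectivity of C ∘ C
  have hCinj : Function.Injective
      (fun r : (GaloisField 2 2) => (LaurentPolynomial.C (PowerSeries.C r) :
        LaurentPolynomial (PowerSeries (GaloisField 2 2)))) := by
    intro x y h
    simp only at h
    have h' : Polynomial.toLaurent (Polynomial.C (PowerSeries.C x))
        = Polynomial.toLaurent (Polynomial.C (PowerSeries.C y)) := by
      rw [Polynomial.toLaurent_C, Polynomial.toLaurent_C]; exact h
    exact PowerSeries.C_injective
      (Polynomial.C_injective (Polynomial.toLaurent_injective h'))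
  -- ω on T (-1)
  have hTm1 : ω (LaurentPolynomial.T (-1))
      = LaurentPolynomial.C (PowerSeries.C (ζ ^ 2)) * LaurentPolynomial.T (-1) := by
    have h1 : ω (LaurentPolynomial.T (-1)) * ω (LaurentPolynomial.T 1) = 1 := by
      rw [← map_mul, ← LaurentPolynomial.T_add]
      norm_num
    have hinv : (LaurentPolynomial.C (PowerSeries.C ζ) * LaurentPolynomial.T 1) *
        (LaurentPolynomial.C (PowerSeries.C (ζ ^ 2)) * LaurentPolynomial.T (-1)) = 1 := by
      rw [mul_mul_mul_comm, ← map_mul, ← map_mul, ← LaurentPolynomial.T_add,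
        show ζ * ζ ^ 2 = ζ ^ 3 by ring, hζ3]
      simp
    calc ω (LaurentPolynomial.T (-1))
        = ω (LaurentPolynomial.T (-1)) *
          ((LaurentPolynomial.C (PowerSeries.C ζ) * LaurentPolynomial.T 1) *
           (LaurentPolynomial.C (PowerSeries.C (ζ ^ 2)) * LaurentPolynomial.T (-1))) := by
          rw [hinv, mul_one]
      _ = (ω (LaurentPolynomial.T (-1)) * ω (LaurentPolynomial.T 1)) *
          (LaurentPolynomial.C (PowerSeries.C (ζ ^ 2)) * LaurentPolynomial.T (-1)) := by
          rw [hu]; ring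
      _ = LaurentPolynomial.C (PowerSeries.C (ζ ^ 2)) * LaurentPolynomial.T (-1) := by
          rw [h1, one_mul]
  -- ω on T b
  have hT : ∀ b : ℤ, ω (LaurentPolynomial.T b)
      = LaurentPolynomial.C (PowerSeries.C (ζ ^ b)) * LaurentPolynomial.T b := by
    intro b
    induction b using Int.induction_on with
    | zero => simp
    | succ n ih =>
      rw [LaurentPolynomial.T_add, map_mul, ih, hu, zpow_add₀ hζ0, zpow_one]
      simp only [map_mul]
      ring
    | pred n ih =>
      rw [show (-(n:ℤ) - 1) = (-n) + (-1) by ring, LaurentPolynomial.T_add,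
        map_mul, ih, hTm1, show (-(n:ℤ)) + (-1) = -n - 1 by ring,
        zpow_sub₀ hζ0, zpow_one, div_eq_mul_inv, hζinv]
      simp only [map_mul]
      ring
  intro a b
  -- ω on the monomial
  have hmon : ω (LaurentPolynomial.C (PowerSeries.X ^ a) * LaurentPolynomial.T b)
      = LaurentPolynomial.C (PowerSeries.C (ζ ^ ((a:ℤ) + b))) *
        (LaurentPolynomial.C (PowerSeries.X ^ a) * LaurentPolynomial.T b) := by
    rw [map_mul, hT, show (PowerSeries.X ^ a : PowerSeries (GaloisField 2 2))
        = (PowerSeries.X : PowerSeries (GaloisField 2 2)) ^ a from rfl, map_pow, map_pow, hu1,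
      zpow_add₀ hζ0, zpow_natCast]
    simp only [← map_pow, mul_pow, map_mul]
    ring
  have hmne : (LaurentPolynomial.C (PowerSeries.X ^ a) * LaurentPolynomial.T b :
      LaurentPolynomial (PowerSeries (GaloisField 2 2))) ≠ 0 := by
    apply mul_ne_zero
    · intro h
      have h' : Polynomial.toLaurent (Polynomial.C ((PowerSeries.X : PowerSeries (GaloisField 2 2)) ^ a))
          = Polynomial.toLaurent (0 : Polynomial (PowerSeries (GaloisField 2 2))) := by
        rw [Polynomial.toLaurent_C, map_zero]; exact h
      have h2' := Polynomial.toLaurent_injective h'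
      rw [Polynomial.C_eq_zero] at h2'
      exact pow_ne_zero a PowerSeries.X_ne_zero h2'
    · exact (LaurentPolynomial.isUnit_T b).ne_zero
  rw [hmon]
  constructor
  · intro h
    have h' : (LaurentPolynomial.C (PowerSeries.C (ζ ^ ((a:ℤ) + b))) - 1) *
        (LaurentPolynomial.C (PowerSeries.X ^ a) * LaurentPolynomial.T b) = 0 := by
      rw [sub_mul, one_mul, h, sub_self]
    rcases mul_eq_zero.mp h' with h0 | h0
    · have h1 : LaurentPolynomial.C (PowerSeries.C (ζ ^ ((a:ℤ) + b)))
          = LaurentPolynomial.C (PowerSeries.C 1) := by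
        rw [sub_eq_zero] at h0
        rw [h0]; simp
      exact (key _).mp (hCinj h1)
    · exact absurd h0 hmne
  · intro h
    have : ζ ^ ((a:ℤ) + b) = 1 := (key _).mpr h
    rw [this]
    simp
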